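/- Assume the primal-dual pair {(P),(D)} (with data c ∈ X*, b ∈ Y*) is consistent, and let v be the value of the game G = (α,β,A) for some α ∈ int C*, β ∈ int K*. If v = 0, B^I ∩ c^⊥ ≠ ∅, and B^II ∩ b^⊥ ≠ ∅, then neither (P) nor (D) is strictly feasible. If in addition B^I ∩ c^⊥ ∩ F(P) ≠ ∅ and B^II ∩ b^⊥ ∩ F(D) ≠ ∅, then val(P) = val(D) = 0, B^I ∩ S(P) ≠ ∅, and B^II ∩ S(D) ≠ ∅. -/

import Mathlib

set_option maxHeartbeats 1000000
set_option synthInstance.maxHeartbeats 1000000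

lemma aux_pos_stmt10 {E : Type*} [NormedAddCommGroup E] [NormedSpace ℝ E]
    (C0 : Set E) (w : E →L[ℝ] ℝ)
    (hw : w ∈ interior {f : E →L[ℝ] ℝ | ∀ x ∈ C0, 0 ≤ f x})
    (x : E) (hx : x ∈ C0) (hx0 : x ≠ 0) : 0 < w x := by
  rw [mem_interior_iff_mem_nhds, Metric.mem_nhds_iff] at hw
  obtain ⟨ε, hε, hball⟩ := hw
  obtain ⟨g, hg1, hgx⟩ := exists_dual_vector ℝ x (norm_ne_zero_iff.mpr hx0)
  have hmem : w - (ε/2) • g ∈ {f : E →L[ℝ] ℝ | ∀ x ∈ C0, 0 ≤ f x} := by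
    apply hball
    rw [Metric.mem_ball, dist_eq_norm]
    have h1 : w - (ε/2) • g - w = -((ε/2) • g) := by abel
    rw [h1, norm_neg]
    have h2 : ‖(ε/2) • g‖ ≤ ‖(ε/2 : ℝ)‖ * ‖g‖ := ContinuousLinearMap.opNorm_smul_le _ _
    rw [hg1, Real.norm_eq_abs, abs_of_pos (by linarith : (0:ℝ) < ε/2)] at h2
    linarith
  have h0 := hmem x hx
  simp only [ContinuousLinearMap.sub_apply, ContinuousLinearMap.smul_apply, smul_eq_mul] at h0
  have hxnorm : 0 < ‖x‖ := norm_pos_iff.mpr hx0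
  have hgx' : g x = ‖x‖ := hgx
  nlinarith [h0, hxnorm]

/-- Theorem 4.1(iii): if {(P),(D)} is consistent, the game G = (α,β,A)
has value v = 0, B^I ∩ c^⊥ ≠ ∅ and B^II ∩ b^⊥ ≠ ∅, then neither (P) nor (D) is strictly
feasible; if moreover B^I ∩ c^⊥ ∩ F(P) ≠ ∅ and B^II ∩ b^⊥ ∩ F(D) ≠ ∅, then
val(P) = val(D) = 0 and B^I ∩ S(P) ≠ ∅, B^II ∩ S(D) ≠ ∅. -/
theorem stmt10
    {X Y : Type*} [NormedAddCommGroup X] [NormedSpace ℝ X] [CompleteSpace X]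
    [NormedAddCommGroup Y] [NormedSpace ℝ Y] [CompleteSpace Y]
    -- reflexivity of X and Y
    (hXrefl : Function.Surjective (NormedSpace.inclusionInDoubleDual ℝ X))
    (hYrefl : Function.Surjective (NormedSpace.inclusionInDoubleDual ℝ Y))
    (A : X →L[ℝ] (Y →L[ℝ] ℝ))
    -- closed convex cones C, K with solid dual cones
    (C : Set X) (K : Set Y)
    (hCcone : ∀ (r : ℝ), 0 ≤ r → ∀ x ∈ C, r • x ∈ C) (hCconv : Convex ℝ C)
    (hCclosed : IsClosed C)
    (hKcone : ∀ (r : ℝ), 0 ≤ r → ∀ y ∈ K, r • y ∈ K) (hKconv : Convex ℝ K)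
    (hKclosed : IsClosed K)
    (Cstar : Set (X →L[ℝ] ℝ)) (hCstar : Cstar = {w : X →L[ℝ] ℝ | ∀ x ∈ C, 0 ≤ w x})
    (Kstar : Set (Y →L[ℝ] ℝ)) (hKstar : Kstar = {z : Y →L[ℝ] ℝ | ∀ y ∈ K, 0 ≤ z y})
    -- data of the programs and consistency
    (c : X →L[ℝ] ℝ) (b : Y →L[ℝ] ℝ)
    (FeasP : Set X) (hFeasP : FeasP = {x | x ∈ C ∧ A x - b ∈ Kstar})
    (FeasD : Set Y) (hFeasD : FeasD = {y | y ∈ K ∧ -(A.flip y) + c ∈ Cstar})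
    (hPne : FeasP.Nonempty) (hDne : FeasD.Nonempty)
    (valP valD : ℝ)
    (hvalP : valP = sInf ((fun x => c x) '' FeasP))
    (hvalD : valD = sSup ((fun y => b y) '' FeasD))
    (SolP : Set X) (hSolP : SolP = {x ∈ FeasP | c x = valP})
    (SolD : Set Y) (hSolD : SolD = {y ∈ FeasD | b y = valD})
    -- the game G = (α,β,A) with α ∈ int C*, β ∈ int K*
    (α : X →L[ℝ] ℝ) (hα : α ∈ interior Cstar)
    (β : Y →L[ℝ] ℝ) (hβ : β ∈ interior Kstar)
    (S : Set X) (hS : S = {x ∈ C | α x = 1})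
    (T : Set Y) (hT : T = {y ∈ K | β y = 1})
    -- finite security levels (F3)
    (hSne : S.Nonempty) (hTne : T.Nonempty)
    (hbb : ∀ x ∈ S, BddBelow ((fun y => A x y) '' T))
    (hba : BddAbove ((fun x => sInf ((fun y => A x y) '' T)) '' S))
    (hba' : ∀ y ∈ T, BddAbove ((fun x => A x y) '' S))
    (hbb' : BddBelow ((fun y => sSup ((fun x => A x y) '' S)) '' T))
    -- v is the value of the game
    (v : ℝ)
    (hv : v = sSup ((fun x => sInf ((fun y => A x y) '' T)) '' S))
    (hv' : v = sInf ((fun y => sSup ((fun x => A x y) '' S)) '' T))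
    -- sets of optimal strategies and the orthogonal complements c^⊥, b^⊥
    (BI : Set X) (hBI : BI = {x ∈ S | sInf ((fun y => A x y) '' T) = v})
    (BII : Set Y) (hBII : BII = {y ∈ T | sSup ((fun x => A x y) '' S) = v})
    (cperp : Set X) (hcperp : cperp = {x : X | c x = 0})
    (bperp : Set Y) (hbperp : bperp = {y : Y | b y = 0})
    -- hypotheses of part (iii): v = 0, B^I ∩ c^⊥ ≠ ∅ and B^II ∩ b^⊥ ≠ ∅
    (hv0 : v = 0)
    (hBIne : (BI ∩ cperp).Nonempty) (hBIIne : (BII ∩ bperp).Nonempty) :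
    -- neither (P) nor (D) is strictly feasible
    (¬ ∃ x ∈ C, A x - b ∈ interior Kstar) ∧
    (¬ ∃ y ∈ K, -(A.flip y) + c ∈ interior Cstar) ∧
    -- additional conclusion under the extra feasibility assumptions
    ((BI ∩ cperp ∩ FeasP).Nonempty → (BII ∩ bperp ∩ FeasD).Nonempty →
      valP = 0 ∧ valD = 0 ∧ (BI ∩ SolP).Nonempty ∧ (BII ∩ SolD).Nonempty) := by
  subst hCstar hKstar hFeasP hFeasD hSolP hSolD hS hT hBI hBII hcperp hbperp hv0
  obtain ⟨x₀, hx₀BI, hx₀c⟩ := hBIne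
  obtain ⟨y₀, hy₀BII, hy₀b⟩ := hBIIne
  obtain ⟨hx₀S, hx₀inf⟩ := hx₀BI
  obtain ⟨hy₀T, hy₀sup⟩ := hy₀BII
  obtain ⟨hx₀C, hx₀α⟩ := hx₀S
  obtain ⟨hy₀K, hy₀β⟩ := hy₀T
  have hx₀c' : c x₀ = 0 := hx₀c
  have hy₀b' : b y₀ = 0 := hy₀b
  have hx₀ne : x₀ ≠ 0 := by
    intro h; rw [h, map_zero] at hx₀α; exact one_ne_zero hx₀α.symm
  have hy₀ne : y₀ ≠ 0 := by
    intro h; rw [h, map_zero] at hy₀β; exact one_ne_zero hy₀β.symm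
  have hβpos : ∀ y ∈ K, y ≠ 0 → 0 < β y := fun y hy hy0 =>
    aux_pos_stmt10 K β hβ y hy hy0
  have hαpos : ∀ x ∈ C, x ≠ 0 → 0 < α x := fun x hx hx0 =>
    aux_pos_stmt10 C α hα x hx hx0
  -- A x₀ y ≥ 0 for all y ∈ K
  have hAx₀ : ∀ y ∈ K, 0 ≤ A x₀ y := by
    intro y hy
    by_cases h0 : y = 0
    · rw [h0, map_zero]
    · have hb := hβpos y hy h0
      have hyT : (β y)⁻¹ • y ∈ {y ∈ K | β y = 1} := by
        refine ⟨hKcone _ (le_of_lt (inv_pos.mpr hb)) y hy, ?_⟩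
        rw [map_smul, smul_eq_mul, inv_mul_cancel₀ (ne_of_gt hb)]
      have hle : sInf ((fun y => A x₀ y) '' {y ∈ K | β y = 1}) ≤ A x₀ ((β y)⁻¹ • y) :=
        csInf_le (hbb x₀ ⟨hx₀C, hx₀α⟩) ⟨_, hyT, rfl⟩
      rw [hx₀inf] at hle
      have h2 : A x₀ ((β y)⁻¹ • y) = (β y)⁻¹ * A x₀ y := by
        rw [map_smul, smul_eq_mul]
      rw [h2] at hle
      nlinarith [inv_pos.mpr hb]
  -- A x y₀ ≤ 0 for all x ∈ C
  have hAy₀ : ∀ x ∈ C, A x y₀ ≤ 0 := by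
    intro x hx
    by_cases h0 : x = 0
    · rw [h0, map_zero, ContinuousLinearMap.zero_apply]
    · have ha := hαpos x hx h0
      have hxS : (α x)⁻¹ • x ∈ {x ∈ C | α x = 1} := by
        refine ⟨hCcone _ (le_of_lt (inv_pos.mpr ha)) x hx, ?_⟩
        rw [map_smul, smul_eq_mul, inv_mul_cancel₀ (ne_of_gt ha)]
      have hle : A ((α x)⁻¹ • x) y₀ ≤ sSup ((fun x => A x y₀) '' {x ∈ C | α x = 1}) :=
        le_csSup (hba' y₀ ⟨hy₀K, hy₀β⟩) ⟨_, hxS, rfl⟩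
      rw [hy₀sup] at hle
      have h2 : A ((α x)⁻¹ • x) y₀ = (α x)⁻¹ * A x y₀ := by
        rw [map_smul, ContinuousLinearMap.smul_apply, smul_eq_mul]
      rw [h2] at hle
      nlinarith [inv_pos.mpr ha]
  refine ⟨?_, ?_, ?_⟩
  · -- (P) not strictly feasible
    rintro ⟨x, hxC, hxint⟩
    have hpos : 0 < (A x - b) y₀ := aux_pos_stmt10 K (A x - b) hxint y₀ hy₀K hy₀ne
    rw [ContinuousLinearMap.sub_apply, hy₀b'] at hpos
    have := hAy₀ x hxC
    linarith
  · -- (D) not strictly feasible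
    rintro ⟨y, hyK, hyint⟩
    have hpos : 0 < (-(A.flip y) + c) x₀ :=
      aux_pos_stmt10 C (-(A.flip y) + c) hyint x₀ hx₀C hx₀ne
    rw [ContinuousLinearMap.add_apply, ContinuousLinearMap.neg_apply,
      ContinuousLinearMap.flip_apply, hx₀c'] at hpos
    have := hAx₀ y hyK
    linarith
  · -- extra conclusions
    rintro ⟨x₁, ⟨hx₁BI, hx₁c⟩, hx₁F⟩ ⟨y₁, ⟨hy₁BII, hy₁b⟩, hy₁F⟩
    have hx₁c' : c x₁ = 0 := hx₁c
    have hy₁b' : b y₁ = 0 := hy₁b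
    obtain ⟨hy₁K, hy₁Cst⟩ := hy₁F
    obtain ⟨hx₁C, hx₁Kst⟩ := hx₁F
    -- lower bound for primal objective values
    have hlbP : ∀ z ∈ (fun x => c x) '' {x | x ∈ C ∧ A x - b ∈ {z : Y →L[ℝ] ℝ | ∀ y ∈ K, 0 ≤ z y}}, 0 ≤ z := by
      rintro _ ⟨x, ⟨hxC, hxK⟩, rfl⟩
      have h1 := hxK y₁ hy₁K
      have h2 := hy₁Cst x hxC
      rw [ContinuousLinearMap.sub_apply] at h1
      rw [ContinuousLinearMap.add_apply, ContinuousLinearMap.neg_apply,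
        ContinuousLinearMap.flip_apply] at h2
      simp only
      linarith
    have hubD : ∀ z ∈ (fun y => b y) '' {y | y ∈ K ∧ -(A.flip y) + c ∈ {w : X →L[ℝ] ℝ | ∀ x ∈ C, 0 ≤ w x}}, z ≤ 0 := by
      rintro _ ⟨y, ⟨hyK, hyC⟩, rfl⟩
      have h1 := hx₁Kst y hyK
      have h2 := hyC x₁ hx₁C
      rw [ContinuousLinearMap.sub_apply] at h1
      rw [ContinuousLinearMap.add_apply, ContinuousLinearMap.neg_apply,
        ContinuousLinearMap.flip_apply, hx₁c'] at h2
      simp only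
      linarith
    have h0memP : (0:ℝ) ∈ (fun x => c x) '' {x | x ∈ C ∧ A x - b ∈ {z : Y →L[ℝ] ℝ | ∀ y ∈ K, 0 ≤ z y}} :=
      ⟨x₁, ⟨hx₁C, hx₁Kst⟩, hx₁c'⟩
    have h0memD : (0:ℝ) ∈ (fun y => b y) '' {y | y ∈ K ∧ -(A.flip y) + c ∈ {w : X →L[ℝ] ℝ | ∀ x ∈ C, 0 ≤ w x}} :=
      ⟨y₁, ⟨hy₁K, hy₁Cst⟩, hy₁b'⟩
    have hvP0 : valP = 0 := by
      rw [hvalP]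
      exact le_antisymm (csInf_le ⟨0, fun z hz => hlbP z hz⟩ h0memP)
        (le_csInf ⟨0, h0memP⟩ hlbP)
    have hvD0 : valD = 0 := by
      rw [hvalD]
      exact le_antisymm (csSup_le ⟨0, h0memD⟩ hubD)
        (le_csSup ⟨0, fun z hz => hubD z hz⟩ h0memD)
    refine ⟨hvP0, hvD0, ⟨x₁, hx₁BI, ⟨hx₁C, hx₁Kst⟩, by rw [hx₁c', hvP0]⟩,
      ⟨y₁, hy₁BII, ⟨hy₁K, hy₁Cst⟩, by rw [hy₁b', hvD0]⟩⟩
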